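/- Let M, Y₁ⁿ, Y₂ⁿ, S₁ⁿ, S₂ⁿ, and per-coordinate inputs Xᵢ be discrete random variables such that for each i, S₁ᵢ → (Y₁ᵢ, Y₂ᵢ, S₂ᵢ, Xᵢ) → (Y₁^{n∖i}, Y₂^{n∖i}, S₂^{n∖i}, M, S₁^{i−1}) forms a Markov chain, and I(M; Y₂ⁿ, S₂ⁿ) ≤ δ. Then I(M; Y₁ⁿ, Y₂ⁿ, S₁ⁿ, S₂ⁿ) ≤ Σᵢ [ H(Y₁ᵢ, S₁ᵢ | Y₂ᵢ, S₂ᵢ) − H(S₁ᵢ | Y₁ᵢ, Y₂ᵢ, S₂ᵢ, Xᵢ) ] + δ. -/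

import Mathlib

open Finset

/-- Probability that a discrete random variable `X` takes value `x`,
under the probability mass function `μ` on a finite sample space. -/
noncomputable def prob {Ω α : Type*} [Fintype Ω] [DecidableEq α]
    (μ : Ω → ℝ) (X : Ω → α) (x : α) : ℝ :=
  ∑ ω ∈ Finset.univ.filter (fun ω => X ω = x), μ ω

/-- `μ` is a probability mass function on the finite sample space `Ω`. -/
def IsPMF {Ω : Type*} [Fintype Ω] (μ : Ω → ℝ) : Prop :=
  (∀ ω, 0 ≤ μ ω) ∧ ∑ ω, μ ω = 1

/-- Shannon entropy (natural log) of a discrete random variable. -/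
noncomputable def entH {Ω α : Type*} [Fintype Ω] [Fintype α] [DecidableEq α]
    (μ : Ω → ℝ) (X : Ω → α) : ℝ :=
  ∑ x, -(prob μ X x * Real.log (prob μ X x))

/-- Conditional Shannon entropy `H(X | Y)`. -/
noncomputable def condH {Ω α β : Type*} [Fintype Ω] [Fintype α] [DecidableEq α]
    [Fintype β] [DecidableEq β] (μ : Ω → ℝ) (X : Ω → α) (Y : Ω → β) : ℝ :=
  entH μ (fun ω => (X ω, Y ω)) - entH μ Y

/-- Mutual information `I(X; Y)`. -/
noncomputable def mutInfo {Ω α β : Type*} [Fintype Ω] [Fintype α] [DecidableEq α]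
    [Fintype β] [DecidableEq β] (μ : Ω → ℝ) (X : Ω → α) (Y : Ω → β) : ℝ :=
  entH μ X + entH μ Y - entH μ (fun ω => (X ω, Y ω))

/-- Conditional mutual information `I(X; Y | Z)`. -/
noncomputable def condMutInfo {Ω α β γ : Type*} [Fintype Ω] [Fintype α] [DecidableEq α]
    [Fintype β] [DecidableEq β] [Fintype γ] [DecidableEq γ]
    (μ : Ω → ℝ) (X : Ω → α) (Y : Ω → β) (Z : Ω → γ) : ℝ :=
  condH μ X Z + condH μ Y Z - condH μ (fun ω => (X ω, Y ω)) Z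

/-- `X` and `Y` are independent random variables under `μ`. -/
def IndepRV {Ω α β : Type*} [Fintype Ω] [DecidableEq α] [DecidableEq β]
    (μ : Ω → ℝ) (X : Ω → α) (Y : Ω → β) : Prop :=
  ∀ x y, prob μ (fun ω => (X ω, Y ω)) (x, y) = prob μ X x * prob μ Y y

/-- `A → B → C` forms a Markov chain under `μ`:
`P(A,B,C) P(B) = P(A,B) P(B,C)` pointwise. -/
def MarkovChain {Ω α β γ : Type*} [Fintype Ω] [DecidableEq α] [DecidableEq β] [DecidableEq γ]
    (μ : Ω → ℝ) (A : Ω → α) (B : Ω → β) (C : Ω → γ) : Prop :=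
  ∀ a b c, prob μ (fun ω => (A ω, B ω, C ω)) (a, b, c) * prob μ B b
    = prob μ (fun ω => (A ω, B ω)) (a, b) * prob μ (fun ω => (B ω, C ω)) (b, c)

/-- Binary entropy function (natural log). -/
noncomputable def binEnt (x : ℝ) : ℝ :=
  -(x * Real.log x) - ((1 - x) * Real.log (1 - x))

set_option linter.unusedSectionVars false
set_option linter.unusedVariables false

section ProbLemmas
variable {Ω α β : Type*} [Fintype Ω] [DecidableEq α] [DecidableEq β] {μ : Ω → ℝ}

lemma prob_nonneg (hμ : ∀ ω, 0 ≤ μ ω) (X : Ω → α) (x : α) : 0 ≤ prob μ X x :=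
  Finset.sum_nonneg fun ω _ => hμ ω

lemma sum_prob [Fintype α] (hμ : IsPMF μ) (X : Ω → α) : ∑ x, prob μ X x = 1 := by
  unfold prob
  rw [Finset.sum_fiberwise_of_maps_to (fun ω _ => Finset.mem_univ (X ω)) μ]
  exact hμ.2

lemma sum_prob_mul [Fintype α] [Fintype β] (X : Ω → α) (f : α → β) (c : β → ℝ) :
    ∑ y, prob μ (fun ω => f (X ω)) y * c y = ∑ x, prob μ X x * c (f x) := by
  unfold prob
  have h1 : ∀ y, (∑ ω ∈ Finset.univ.filter (fun ω => f (X ω) = y), μ ω) * c y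
      = ∑ ω ∈ Finset.univ.filter (fun ω => f (X ω) = y), μ ω * c (f (X ω)) := by
    intro y
    rw [Finset.sum_mul]
    exact Finset.sum_congr rfl fun ω hω => by
      rw [(Finset.mem_filter.1 hω).2]
  have h2 : ∀ x, (∑ ω ∈ Finset.univ.filter (fun ω => X ω = x), μ ω) * c (f x)
      = ∑ ω ∈ Finset.univ.filter (fun ω => X ω = x), μ ω * c (f (X ω)) := by
    intro x
    rw [Finset.sum_mul]
    exact Finset.sum_congr rfl fun ω hω => by
      rw [(Finset.mem_filter.1 hω).2]
  simp_rw [h1, h2]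
  rw [Finset.sum_fiberwise_of_maps_to (fun ω _ => Finset.mem_univ (f (X ω))),
    Finset.sum_fiberwise_of_maps_to (fun ω _ => Finset.mem_univ (X ω))]

lemma prob_comp_ge (hμ : ∀ ω, 0 ≤ μ ω) (X : Ω → α) (f : α → β) (x : α) :
    prob μ X x ≤ prob μ (fun ω => f (X ω)) (f x) := by
  apply Finset.sum_le_sum_of_subset_of_nonneg
  · intro ω hω
    simp only [Finset.mem_filter, Finset.mem_univ, true_and] at *
    rw [hω]
  · exact fun ω _ _ => hμ ω

lemma prob_comp_inj {g : α → β} (hg : Function.Injective g) (X : Ω → α) (x : α) :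
    prob μ (fun ω => g (X ω)) (g x) = prob μ X x := by
  unfold prob
  congr 1
  ext ω
  simp [hg.eq_iff]

lemma prob_snd [Fintype α] (X : Ω → α) (Y : Ω → β) (b : β) :
    prob μ Y b = ∑ a, prob μ (fun ω => (X ω, Y ω)) (a, b) := by
  unfold prob
  rw [← Finset.sum_fiberwise_of_maps_to (g := X) (t := Finset.univ)
    (fun ω _ => Finset.mem_univ (X ω)) μ]
  apply Finset.sum_congr rfl
  intro a _
  congr 1
  ext ω
  simp [Prod.ext_iff, and_comm]

lemma prob_fst [Fintype β] (X : Ω → α) (Y : Ω → β) (a : α) :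
    prob μ X a = ∑ b, prob μ (fun ω => (X ω, Y ω)) (a, b) := by
  unfold prob
  rw [← Finset.sum_fiberwise_of_maps_to (g := Y) (t := Finset.univ)
    (fun ω _ => Finset.mem_univ (Y ω)) μ]
  apply Finset.sum_congr rfl
  intro b _
  congr 1
  ext ω
  simp [Prod.ext_iff]

end ProbLemmas

section EntLemmas
variable {Ω α β γ : Type*} [Fintype Ω] {μ : Ω → ℝ}
variable [Fintype α] [DecidableEq α] [Fintype β] [DecidableEq β] [Fintype γ] [DecidableEq γ]

/-- Gibbs-type termwise inequality. -/
lemma gibbs (p q : α → ℝ) (hp : ∀ x, 0 ≤ p x) (hq0 : ∀ x, 0 ≤ q x)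
    (hsup : ∀ x, 0 < p x → 0 < q x) :
    ∑ x, p x * (Real.log (q x) - Real.log (p x)) ≤ ∑ x, (q x - p x) := by
  apply Finset.sum_le_sum
  intro x _
  rcases eq_or_lt_of_le (hp x) with h | h
  · simp only [← h, zero_mul]
    linarith [hq0 x]
  · have hq := hsup x h
    have : Real.log (q x / p x) ≤ q x / p x - 1 :=
      Real.log_le_sub_one_of_pos (div_pos hq h)
    rw [Real.log_div (ne_of_gt hq) (ne_of_gt h)] at this
    have h2 := mul_le_mul_of_nonneg_left this (le_of_lt h)
    calc p x * (Real.log (q x) - Real.log (p x)) ≤ p x * (q x / p x - 1) := h2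
      _ = q x - p x := by field_simp

/-- Entropy is invariant under injective recoding. -/
lemma entH_comp_inj (hμ : ∀ ω, 0 ≤ μ ω) {g : α → β} (hg : Function.Injective g)
    (X : Ω → α) : entH μ (fun ω => g (X ω)) = entH μ X := by
  unfold entH
  have : ∀ y, -(prob μ (fun ω => g (X ω)) y * Real.log (prob μ (fun ω => g (X ω)) y))
      = prob μ (fun ω => g (X ω)) y * (-(Real.log (prob μ (fun ω => g (X ω)) y))) := by
    intro y; ring
  simp_rw [this]
  rw [sum_prob_mul X g (fun y => -(Real.log (prob μ (fun ω => g (X ω)) y)))]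
  apply Finset.sum_congr rfl
  intro x _
  rw [prob_comp_inj hg]
  ring

/-- Entropy decreases under (arbitrary) maps. -/
lemma entH_comp_le (hμ : ∀ ω, 0 ≤ μ ω) (f : α → β) (X : Ω → α) :
    entH μ (fun ω => f (X ω)) ≤ entH μ X := by
  unfold entH
  have h1 : ∀ y, -(prob μ (fun ω => f (X ω)) y * Real.log (prob μ (fun ω => f (X ω)) y))
      = prob μ (fun ω => f (X ω)) y * (-(Real.log (prob μ (fun ω => f (X ω)) y))) := by
    intro y; ring
  simp_rw [h1]
  rw [sum_prob_mul X f (fun y => -(Real.log (prob μ (fun ω => f (X ω)) y)))]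
  apply Finset.sum_le_sum
  intro x _
  rcases eq_or_lt_of_le (prob_nonneg hμ X x) with h | h
  · rw [← h]; simp
  · have hle := prob_comp_ge hμ X f x
    have : Real.log (prob μ X x) ≤ Real.log (prob μ (fun ω => f (X ω)) (f x)) :=
      Real.log_le_log h hle
    nlinarith

end EntLemmas

section Core
variable {Ω α β γ : Type*} [Fintype Ω] {μ : Ω → ℝ}
variable [Fintype α] [DecidableEq α] [Fintype β] [DecidableEq β] [Fintype γ] [DecidableEq γ]

lemma entH_submod (hμ : IsPMF μ) (A : Ω → α) (B : Ω → β) (C : Ω → γ) :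
    entH μ (fun ω => (A ω, B ω, C ω)) + entH μ B
      ≤ entH μ (fun ω => (A ω, B ω)) + entH μ (fun ω => (B ω, C ω)) := by
  set T : Ω → α × β × γ := fun ω => (A ω, B ω, C ω) with hT
  set p : α × β × γ → ℝ := prob μ T with hp
  set pAB : α × β → ℝ := prob μ (fun ω => (A ω, B ω)) with hpAB
  set pBC : β × γ → ℝ := prob μ (fun ω => (B ω, C ω)) with hpBC
  set pB : β → ℝ := prob μ B with hpB
  set q : α × β × γ → ℝ := fun x => pAB (x.1, x.2.1) * pBC x.2 / pB x.2.1 with hq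
  have hp0 : ∀ x, 0 ≤ p x := prob_nonneg hμ.1 T
  have hpAB0 : ∀ y, 0 ≤ pAB y := prob_nonneg hμ.1 _
  have hpBC0 : ∀ y, 0 ≤ pBC y := prob_nonneg hμ.1 _
  have hpB0 : ∀ b, 0 ≤ pB b := prob_nonneg hμ.1 _
  have hdomAB : ∀ x, p x ≤ pAB (x.1, x.2.1) := fun x =>
    prob_comp_ge hμ.1 T (fun x => (x.1, x.2.1)) x
  have hdomBC : ∀ x, p x ≤ pBC x.2 := fun x => prob_comp_ge hμ.1 T Prod.snd x
  have hdomB : ∀ x, p x ≤ pB x.2.1 := fun x => prob_comp_ge hμ.1 T (fun x => x.2.1) x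
  have hdomB' : ∀ y : α × β, pAB y ≤ pB y.2 := fun y =>
    prob_comp_ge hμ.1 (fun ω => (A ω, B ω)) Prod.snd y
  have hq0 : ∀ x, 0 ≤ q x := fun x =>
    div_nonneg (mul_nonneg (hpAB0 _) (hpBC0 _)) (hpB0 _)
  have hsup : ∀ x, 0 < p x → 0 < q x := by
    intro x hx
    exact div_pos (mul_pos (lt_of_lt_of_le hx (hdomAB x)) (lt_of_lt_of_le hx (hdomBC x)))
      (lt_of_lt_of_le hx (hdomB x))
  have hp1 : ∑ x, p x = 1 := sum_prob hμ T
  have hq1 : ∑ x, q x ≤ 1 := by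
    have h1 : ∑ x, q x = ∑ a, ∑ b, ∑ c, pAB (a, b) * pBC (b, c) / pB b := by
      rw [Fintype.sum_prod_type]
      exact Finset.sum_congr rfl fun a _ => Fintype.sum_prod_type _
    have h2 : ∀ a b, ∑ c, pAB (a, b) * pBC (b, c) / pB b = pAB (a, b) / pB b * pB b := by
      intro a b
      have hf : pB b = ∑ c, pBC (b, c) := prob_fst B C b
      calc ∑ c, pAB (a, b) * pBC (b, c) / pB b
          = pAB (a, b) / pB b * ∑ c, pBC (b, c) := by
            rw [Finset.mul_sum]
            exact Finset.sum_congr rfl fun c _ => by ring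
        _ = pAB (a, b) / pB b * pB b := by rw [← hf]
    have h3 : ∀ a b, pAB (a, b) / pB b * pB b ≤ pAB (a, b) := by
      intro a b
      rcases eq_or_lt_of_le (hpB0 b) with h | h
      · rw [← h]; simpa using hpAB0 (a, b)
      · rw [div_mul_cancel₀ _ (ne_of_gt h)]
    have h4 : ∑ a, ∑ b, pAB (a, b) = 1 := by
      rw [← Fintype.sum_prod_type]
      exact sum_prob hμ _
    calc ∑ x, q x = ∑ a, ∑ b, pAB (a, b) / pB b * pB b := by
          rw [h1]; exact Finset.sum_congr rfl fun a _ => Finset.sum_congr rfl fun b _ => h2 a b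
      _ ≤ ∑ a, ∑ b, pAB (a, b) :=
          Finset.sum_le_sum fun a _ => Finset.sum_le_sum fun b _ => h3 a b
      _ = 1 := h4
  have hG : ∑ x, p x * (Real.log (q x) - Real.log (p x)) ≤ 0 := by
    calc ∑ x, p x * (Real.log (q x) - Real.log (p x)) ≤ ∑ x, (q x - p x) :=
          gibbs p q hp0 hq0 hsup
      _ = (∑ x, q x) - ∑ x, p x := Finset.sum_sub_distrib _ _
      _ ≤ 0 := by rw [hp1]; linarith
  have hsplit : ∀ x, p x * Real.log (q x) = p x * Real.log (pAB (x.1, x.2.1))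
      + p x * Real.log (pBC x.2) - p x * Real.log (pB x.2.1) := by
    intro x
    rcases eq_or_lt_of_le (hp0 x) with h | h
    · rw [← h]; ring
    · have h1 := lt_of_lt_of_le h (hdomAB x)
      have h2 := lt_of_lt_of_le h (hdomBC x)
      have h3 := lt_of_lt_of_le h (hdomB x)
      rw [hq]
      rw [Real.log_div (ne_of_gt (mul_pos h1 h2)) (ne_of_gt h3),
        Real.log_mul (ne_of_gt h1) (ne_of_gt h2)]
      ring
  have hmAB : ∑ x, p x * Real.log (pAB (x.1, x.2.1)) = ∑ y, pAB y * Real.log (pAB y) :=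
    (sum_prob_mul T (fun x => (x.1, x.2.1)) (fun y => Real.log (pAB y))).symm
  have hmBC : ∑ x, p x * Real.log (pBC x.2) = ∑ y, pBC y * Real.log (pBC y) :=
    (sum_prob_mul T Prod.snd (fun y => Real.log (pBC y))).symm
  have hmB : ∑ x, p x * Real.log (pB x.2.1) = ∑ b, pB b * Real.log (pB b) :=
    (sum_prob_mul T (fun x => x.2.1) (fun b => Real.log (pB b))).symm
  have hKey : ∑ y, pAB y * Real.log (pAB y) + ∑ y, pBC y * Real.log (pBC y)
      - ∑ b, pB b * Real.log (pB b) ≤ ∑ x, p x * Real.log (p x) := by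
    have : ∑ x, p x * (Real.log (q x) - Real.log (p x))
        = (∑ x, p x * Real.log (pAB (x.1, x.2.1)) + ∑ x, p x * Real.log (pBC x.2)
            - ∑ x, p x * Real.log (pB x.2.1)) - ∑ x, p x * Real.log (p x) := by
      rw [← Finset.sum_add_distrib, ← Finset.sum_sub_distrib, ← Finset.sum_sub_distrib]
      exact Finset.sum_congr rfl fun x _ => by rw [mul_sub, hsplit x]
    rw [this, hmAB, hmBC, hmB] at hG
    linarith
  have e1 : entH μ T = -∑ x, p x * Real.log (p x) := by
    simp [entH, hp]
  have e2 : entH μ (fun ω => (A ω, B ω)) = -∑ y, pAB y * Real.log (pAB y) := by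
    simp [entH, hpAB]
  have e3 : entH μ (fun ω => (B ω, C ω)) = -∑ y, pBC y * Real.log (pBC y) := by
    simp [entH, hpBC]
  have e4 : entH μ B = -∑ b, pB b * Real.log (pB b) := by
    simp [entH, hpB]
  rw [hT] at e1
  rw [e1, e2, e3, e4]
  linarith

lemma markov_entH (hμ : IsPMF μ) {A : Ω → α} {B : Ω → β} {C : Ω → γ}
    (h : MarkovChain μ A B C) :
    entH μ (fun ω => (A ω, B ω, C ω)) + entH μ B
      = entH μ (fun ω => (A ω, B ω)) + entH μ (fun ω => (B ω, C ω)) := by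
  set T : Ω → α × β × γ := fun ω => (A ω, B ω, C ω) with hT
  set p : α × β × γ → ℝ := prob μ T with hp
  set pAB : α × β → ℝ := prob μ (fun ω => (A ω, B ω)) with hpAB
  set pBC : β × γ → ℝ := prob μ (fun ω => (B ω, C ω)) with hpBC
  set pB : β → ℝ := prob μ B with hpB
  have hp0 : ∀ x, 0 ≤ p x := prob_nonneg hμ.1 T
  have hpAB0 : ∀ y, 0 ≤ pAB y := prob_nonneg hμ.1 _
  have hpBC0 : ∀ y, 0 ≤ pBC y := prob_nonneg hμ.1 _
  have hdomAB : ∀ x, p x ≤ pAB (x.1, x.2.1) := fun x =>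
    prob_comp_ge hμ.1 T (fun x => (x.1, x.2.1)) x
  have hdomBC : ∀ x, p x ≤ pBC x.2 := fun x => prob_comp_ge hμ.1 T Prod.snd x
  have hdomB : ∀ x, p x ≤ pB x.2.1 := fun x => prob_comp_ge hμ.1 T (fun x => x.2.1) x
  have hm : ∀ x : α × β × γ, p x * pB x.2.1 = pAB (x.1, x.2.1) * pBC x.2 := by
    intro x
    exact h x.1 x.2.1 x.2.2
  have hsplit : ∀ x, p x * Real.log (p x) = p x * Real.log (pAB (x.1, x.2.1))
      + p x * Real.log (pBC x.2) - p x * Real.log (pB x.2.1) := by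
    intro x
    rcases eq_or_lt_of_le (hp0 x) with hz | hz
    · rw [← hz]; ring
    · have h1 := lt_of_lt_of_le hz (hdomAB x)
      have h2 := lt_of_lt_of_le hz (hdomBC x)
      have h3 := lt_of_lt_of_le hz (hdomB x)
      have : p x = pAB (x.1, x.2.1) * pBC x.2 / pB x.2.1 := by
        field_simp
        exact hm x
      rw [this] at hz ⊢
      rw [Real.log_div (ne_of_gt (mul_pos h1 h2)) (ne_of_gt h3),
        Real.log_mul (ne_of_gt h1) (ne_of_gt h2)]
      ring
  have hmAB : ∑ x, p x * Real.log (pAB (x.1, x.2.1)) = ∑ y, pAB y * Real.log (pAB y) :=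
    (sum_prob_mul T (fun x => (x.1, x.2.1)) (fun y => Real.log (pAB y))).symm
  have hmBC : ∑ x, p x * Real.log (pBC x.2) = ∑ y, pBC y * Real.log (pBC y) :=
    (sum_prob_mul T Prod.snd (fun y => Real.log (pBC y))).symm
  have hmB : ∑ x, p x * Real.log (pB x.2.1) = ∑ b, pB b * Real.log (pB b) :=
    (sum_prob_mul T (fun x => x.2.1) (fun b => Real.log (pB b))).symm
  have hKey : ∑ x, p x * Real.log (p x)
      = ∑ y, pAB y * Real.log (pAB y) + ∑ y, pBC y * Real.log (pBC y)
        - ∑ b, pB b * Real.log (pB b) := by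
    rw [← hmAB, ← hmBC, ← hmB, ← Finset.sum_add_distrib, ← Finset.sum_sub_distrib]
    exact Finset.sum_congr rfl fun x _ => hsplit x
  have e1 : entH μ T = -∑ x, p x * Real.log (p x) := by simp [entH, hp]
  have e2 : entH μ (fun ω => (A ω, B ω)) = -∑ y, pAB y * Real.log (pAB y) := by
    simp [entH, hpAB]
  have e3 : entH μ (fun ω => (B ω, C ω)) = -∑ y, pBC y * Real.log (pBC y) := by
    simp [entH, hpBC]
  have e4 : entH μ B = -∑ b, pB b * Real.log (pB b) := by simp [entH, hpB]
  rw [hT] at e1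
  rw [e1, e2, e3, e4]
  linarith

end Core

section Derived
variable {Ω α α' β γ : Type*} [Fintype Ω] {μ : Ω → ℝ}
variable [Fintype α] [DecidableEq α] [Fintype α'] [DecidableEq α']
  [Fintype β] [DecidableEq β] [Fintype γ] [DecidableEq γ]

lemma entH_congr {X X' : Ω → α} (h : ∀ ω, X ω = X' ω) : entH μ X = entH μ X' :=
  congrArg (entH μ) (funext h)

lemma entH_comp_inj' (hμ : IsPMF μ) {g : α → α'} (hg : Function.Injective g)
    (X : Ω → α) {Y : Ω → α'} (hY : ∀ ω, Y ω = g (X ω)) : entH μ Y = entH μ X := by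
  rw [entH_congr hY]
  exact entH_comp_inj hμ.1 hg X

lemma condH_comp_left (hμ : IsPMF μ) {g : α → α'} (hg : Function.Injective g)
    (X : Ω → α) (W : Ω → β) {X' : Ω → α'} (hX' : ∀ ω, X' ω = g (X ω)) :
    condH μ X' W = condH μ X W := by
  unfold condH
  congr 1
  have h1 : entH μ (fun ω => (X' ω, W ω)) = entH μ (fun ω => (g (X ω), W ω)) :=
    entH_congr fun ω => by rw [hX' ω]
  have h2 : entH μ (fun ω => (g (X ω), W ω))
      = entH μ (fun ω => (X ω, W ω)) := by
    have hg' : Function.Injective (fun y : α × β => (g y.1, y.2)) := by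
      intro a b hab
      simp only [Prod.ext_iff] at hab ⊢
      exact ⟨hg hab.1, hab.2⟩
    exact entH_comp_inj hμ.1 hg' (fun ω => (X ω, W ω))
  rw [h1, h2]

lemma condH_comp_right (hμ : IsPMF μ) {g : β → γ} (hg : Function.Injective g)
    (X : Ω → α) (Z : Ω → β) {Z' : Ω → γ} (hZ' : ∀ ω, Z' ω = g (Z ω)) :
    condH μ X Z' = condH μ X Z := by
  unfold condH
  have h1 : entH μ (fun ω => (X ω, Z' ω)) = entH μ (fun ω => (X ω, g (Z ω))) :=
    entH_congr fun ω => by rw [hZ' ω]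
  have hg' : Function.Injective (fun y : α × β => (y.1, g y.2)) := by
    intro a b hab
    simp only [Prod.ext_iff] at hab ⊢
    exact ⟨hab.1, hg hab.2⟩
  have h2 : entH μ (fun ω => (X ω, g (Z ω))) = entH μ (fun ω => (X ω, Z ω)) :=
    entH_comp_inj hμ.1 hg' (fun ω => (X ω, Z ω))
  have h3 : entH μ Z' = entH μ Z := by
    rw [entH_congr hZ']
    exact entH_comp_inj hμ.1 hg Z
  rw [h1, h2, h3]

lemma condH_nonneg (hμ : IsPMF μ) (X : Ω → α) (Y : Ω → β) : 0 ≤ condH μ X Y := by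
  have := entH_comp_le (μ := μ) hμ.1 Prod.snd (fun ω => (X ω, Y ω))
  exact sub_nonneg.2 this

lemma condH_subsingleton (hμ : IsPMF μ) [Subsingleton α] [Nonempty α]
    (X : Ω → α) (W : Ω → β) : condH μ X W = 0 := by
  have a₀ : α := Classical.arbitrary α
  have hg : Function.Injective (fun w : β => (a₀, w)) := fun a b hab => by
    simpa [Prod.ext_iff] using hab
  have h1 : entH μ (fun ω => (X ω, W ω)) = entH μ (fun ω => (a₀, W ω)) :=
    entH_congr fun ω => by rw [Subsingleton.elim (X ω) a₀]
  have h2 : entH μ (fun ω => (a₀, W ω)) = entH μ W := entH_comp_inj hμ.1 hg W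
  unfold condH
  rw [h1, h2, sub_self]

lemma condH_cond_reduce (hμ : IsPMF μ) (A : Ω → α) (Y : Ω → β) (Z : Ω → γ) :
    condH μ A (fun ω => (Y ω, Z ω)) ≤ condH μ A Y := by
  unfold condH
  have := entH_submod hμ A Y Z
  linarith

lemma condH_comp_right_ge (hμ : IsPMF μ) (A : Ω → α) (W : Ω → β) (f : β → γ) :
    condH μ A W ≤ condH μ A (fun ω => f (W ω)) := by
  have hg : Function.Injective (fun w : β => (f w, w)) := fun a b hab => by
    simp only [Prod.mk.injEq] at hab
    exact hab.2
  have h1 : condH μ A (fun ω => (f (W ω), W ω)) = condH μ A W :=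
    condH_comp_right hμ hg A W (fun ω => rfl)
  rw [← h1]
  exact condH_cond_reduce hμ A (fun ω => f (W ω)) W

lemma condH_pair_le (hμ : IsPMF μ) (A : Ω → α) (B : Ω → β) (W : Ω → γ) :
    condH μ (fun ω => (A ω, B ω)) W ≤ condH μ A W + condH μ B W := by
  unfold condH
  have hr1 : entH μ (fun ω => ((A ω, B ω), W ω))
      = entH μ (fun ω => (A ω, W ω, B ω)) := by
    have hg : Function.Injective (fun x : α × γ × β => ((x.1, x.2.2), x.2.1)) := by
      intro a b hab
      simp only [Prod.mk.injEq] at hab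
      exact Prod.ext hab.1.1 (Prod.ext hab.2 hab.1.2)
    exact entH_comp_inj' hμ hg (fun ω => (A ω, W ω, B ω)) (fun ω => rfl)
  have hr2 : entH μ (fun ω => (W ω, B ω)) = entH μ (fun ω => (B ω, W ω)) := by
    have hg : Function.Injective (fun x : β × γ => (x.2, x.1)) := by
      intro a b hab
      simp only [Prod.mk.injEq] at hab
      exact Prod.ext hab.2 hab.1
    exact entH_comp_inj' hμ hg (fun ω => (B ω, W ω)) (fun ω => rfl)
  have := entH_submod hμ A W B
  rw [hr2] at this
  rw [hr1]
  linarith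

lemma condH_pair_chain (hμ : IsPMF μ) (A : Ω → α) (B : Ω → β) (W : Ω → γ) :
    condH μ (fun ω => (A ω, B ω)) W
      = condH μ A (fun ω => (B ω, W ω)) + condH μ B W := by
  unfold condH
  have hr1 : entH μ (fun ω => ((A ω, B ω), W ω))
      = entH μ (fun ω => (A ω, B ω, W ω)) := by
    have hg : Function.Injective (fun x : α × β × γ => ((x.1, x.2.1), x.2.2)) := by
      intro a b hab
      simp only [Prod.mk.injEq] at hab
      exact Prod.ext hab.1.1 (Prod.ext hab.1.2 hab.2)
    exact entH_comp_inj' hμ hg (fun ω => (A ω, B ω, W ω)) (fun ω => rfl)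
  rw [hr1]
  ring

lemma markov_condH (hμ : IsPMF μ) {A : Ω → α} {B : Ω → β} {C : Ω → γ}
    (h : MarkovChain μ A B C) :
    condH μ A (fun ω => (B ω, C ω)) = condH μ A B := by
  unfold condH
  have := markov_entH hμ h
  linarith

end Derived

section Vec
variable {Ω 𝓤 𝓦 : Type*} [Fintype Ω] {μ : Ω → ℝ}
variable [Fintype 𝓤] [DecidableEq 𝓤] [Fintype 𝓦] [DecidableEq 𝓦]

/-- Splitting a length-`k+1` prefix into last coordinate and length-`k` prefix
is injective. -/
lemma split_inj (k : ℕ) :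
    Function.Injective (fun f : Fin (k+1) → 𝓤 => (f (Fin.last k), fun j : Fin k => f j.castSucc)) := by
  intro f f' h
  simp only [Prod.mk.injEq] at h
  funext j
  rcases Fin.eq_castSucc_or_eq_last j with ⟨j', rfl⟩ | rfl
  · exact congrFun h.2 j'
  · exact h.1

/-- Subadditivity of conditional entropy over coordinates. -/
lemma condH_vec_le (hμ : IsPMF μ) (n : ℕ) (U : Ω → Fin n → 𝓤) (W : Ω → 𝓦) :
    condH μ U W ≤ ∑ i, condH μ (fun ω => U ω i) W := by
  have key : ∀ k, ∀ hk : k ≤ n,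
      condH μ (fun ω => fun j : Fin k => U ω (Fin.castLE hk j)) W
        ≤ ∑ i ∈ Finset.univ.filter (fun i : Fin n => i.val < k),
            condH μ (fun ω => U ω i) W := by
    intro k
    induction k with
    | zero =>
      intro hk
      have hf : Finset.univ.filter (fun i : Fin n => i.val < 0) = ∅ := by
        apply Finset.filter_false_of_mem
        intro i _
        omega
      rw [hf, Finset.sum_empty]
      haveI : Unique (Fin 0 → 𝓤) := Pi.uniqueOfIsEmpty _
      rw [condH_subsingleton hμ]
    | succ k ih =>
      intro hk'
      have hk : k ≤ n := Nat.le_of_succ_le hk'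
      set i₀ : Fin n := ⟨k, hk'⟩ with hi₀
      have hrec : condH μ (fun ω => fun j : Fin (k+1) => U ω (Fin.castLE hk' j)) W
          = condH μ (fun ω => (U ω i₀, fun j : Fin k => U ω (Fin.castLE hk j))) W := by
        exact (condH_comp_left hμ (split_inj k)
          (fun ω => fun j : Fin (k+1) => U ω (Fin.castLE hk' j)) W
          (fun ω => rfl)).symm
      have hsum : Finset.univ.filter (fun i : Fin n => i.val < k + 1)
          = insert i₀ (Finset.univ.filter (fun i : Fin n => i.val < k)) := by
        ext i
        simp only [Finset.mem_filter, Finset.mem_univ, true_and, Finset.mem_insert,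
          Fin.ext_iff, hi₀]
        omega
      have hni : i₀ ∉ Finset.univ.filter (fun i : Fin n => i.val < k) := by
        simp [hi₀]
      rw [hrec, hsum, Finset.sum_insert hni]
      calc condH μ (fun ω => (U ω i₀, fun j : Fin k => U ω (Fin.castLE hk j))) W
          ≤ condH μ (fun ω => U ω i₀) W
            + condH μ (fun ω => fun j : Fin k => U ω (Fin.castLE hk j)) W :=
            condH_pair_le hμ _ _ _
        _ ≤ _ := by
            have := ih hk
            linarith
  have h := key n le_rfl
  have heq : (fun ω => fun j : Fin n => U ω (Fin.castLE le_rfl j)) = U := by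
    funext ω j
    rfl
  rw [heq] at h
  have hfilter : Finset.univ.filter (fun i : Fin n => i.val < n) = Finset.univ := by
    apply Finset.filter_true_of_mem
    intro i _
    exact i.isLt
  rwa [hfilter] at h

/-- Chain-rule lower bound for conditional entropy over coordinates. -/
lemma condH_vec_ge (hμ : IsPMF μ) (n : ℕ) (S : Ω → Fin n → 𝓤) (T : Ω → 𝓦)
    (b : Fin n → ℝ)
    (hb : ∀ i : Fin n, b i ≤ condH μ (fun ω => S ω i)
      (fun ω => ((fun j : Fin i.val => S ω (Fin.castLE i.isLt.le j)), T ω))) :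
    ∑ i, b i ≤ condH μ S T := by
  have key : ∀ k, ∀ hk : k ≤ n,
      ∑ i ∈ Finset.univ.filter (fun i : Fin n => i.val < k), b i
        ≤ condH μ (fun ω => fun j : Fin k => S ω (Fin.castLE hk j)) T := by
    intro k
    induction k with
    | zero =>
      intro hk
      have hf : Finset.univ.filter (fun i : Fin n => i.val < 0) = ∅ := by
        apply Finset.filter_false_of_mem
        intro i _
        omega
      rw [hf, Finset.sum_empty]
      exact condH_nonneg hμ _ _
    | succ k ih =>
      intro hk'
      have hk : k ≤ n := Nat.le_of_succ_le hk'
      set i₀ : Fin n := ⟨k, hk'⟩ with hi₀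
      have hrec : condH μ (fun ω => fun j : Fin (k+1) => S ω (Fin.castLE hk' j)) T
          = condH μ (fun ω => (S ω i₀, fun j : Fin k => S ω (Fin.castLE hk j))) T := by
        exact (condH_comp_left hμ (split_inj k)
          (fun ω => fun j : Fin (k+1) => S ω (Fin.castLE hk' j)) T
          (fun ω => rfl)).symm
      have hsum : Finset.univ.filter (fun i : Fin n => i.val < k + 1)
          = insert i₀ (Finset.univ.filter (fun i : Fin n => i.val < k)) := by
        ext i
        simp only [Finset.mem_filter, Finset.mem_univ, true_and, Finset.mem_insert,
          Fin.ext_iff, hi₀]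
        omega
      have hni : i₀ ∉ Finset.univ.filter (fun i : Fin n => i.val < k) := by
        simp [hi₀]
      rw [hrec, hsum, Finset.sum_insert hni]
      have hchain : condH μ (fun ω => (S ω i₀, fun j : Fin k => S ω (Fin.castLE hk j))) T
          = condH μ (fun ω => S ω i₀)
              (fun ω => ((fun j : Fin k => S ω (Fin.castLE hk j)), T ω))
            + condH μ (fun ω => fun j : Fin k => S ω (Fin.castLE hk j)) T :=
        condH_pair_chain hμ _ _ _
      rw [hchain]
      have hb0 : b i₀ ≤ condH μ (fun ω => S ω i₀)
          (fun ω => ((fun j : Fin k => S ω (Fin.castLE hk j)), T ω)) := hb i₀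
      have := ih hk
      linarith
  have h := key n le_rfl
  have heq : (fun ω => fun j : Fin n => S ω (Fin.castLE le_rfl j)) = S := by
    funext ω j
    rfl
  rw [heq] at h
  have hfilter : Finset.univ.filter (fun i : Fin n => i.val < n) = Finset.univ := by
    apply Finset.filter_true_of_mem
    intro i _
    exact i.isLt
  rwa [hfilter] at h

end Vec

section Main

/-- Insert a value at coordinate `i` into a vector defined off `i`. -/
def insVec {n : ℕ} {𝓐 : Type*} (i : Fin n) (v : 𝓐) (f : {j : Fin n // j ≠ i} → 𝓐) :
    Fin n → 𝓐 :=
  fun j => if h : j = i then v else f ⟨j, h⟩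

lemma insVec_self {n : ℕ} {𝓐 : Type*} (i : Fin n) (v : 𝓐) (f : {j : Fin n // j ≠ i} → 𝓐) :
    insVec i v f i = v := dif_pos rfl

lemma insVec_apply_ne {n : ℕ} {𝓐 : Type*} (i : Fin n) (v : 𝓐)
    (f : {j : Fin n // j ≠ i} → 𝓐) (j : {j : Fin n // j ≠ i}) :
    insVec i v f j.1 = f j := by
  have h : ¬ (j.1 = i) := j.2
  simp only [insVec, dif_neg h]

lemma insVec_eval {n : ℕ} {𝓐 : Type*} (i : Fin n) (f : Fin n → 𝓐) :
    insVec i (f i) (fun j => f j.1) = f := by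
  funext j
  by_cases h : j = i
  · subst h
    exact insVec_self _ _ _
  · exact insVec_apply_ne i (f i) (fun j => f j.1) ⟨j, h⟩

lemma insVec_inj {n : ℕ} {𝓐 : Type*} {i : Fin n} {v v' : 𝓐}
    {f f' : {j : Fin n // j ≠ i} → 𝓐} (h : insVec i v f = insVec i v' f') :
    v = v' ∧ f = f' := by
  constructor
  · have := congrFun h i
    rwa [insVec_self, insVec_self] at this
  · funext j
    have := congrFun h j.1
    rwa [insVec_apply_ne, insVec_apply_ne] at this

end Main

set_option synthInstance.maxSize 2000
set_option maxHeartbeats 1000000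



/-- Multiletter-to-single-letter step of the converse of
Proposition 4: if for each `i` the chain
`S₁ᵢ → (Y₁ᵢ,Y₂ᵢ,S₂ᵢ,Xᵢ) → (Y₁^{n∖i}, Y₂^{n∖i}, S₂^{n∖i}, M, S₁^{i−1})` is
Markov and `I(M; Y₂ⁿ, S₂ⁿ) ≤ δ`, then
`I(M; Y₁ⁿ,Y₂ⁿ,S₁ⁿ,S₂ⁿ) ≤ Σᵢ [H(Y₁ᵢ,S₁ᵢ|Y₂ᵢ,S₂ᵢ) − H(S₁ᵢ|Y₁ᵢ,Y₂ᵢ,S₂ᵢ,Xᵢ)] + δ`. -/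
theorem converse_secrecy_single_letterization
    {Ω 𝓜 𝓨₁ 𝓨₂ 𝓢₁ 𝓢₂ 𝓧 : Type*} [Fintype Ω]
    [Fintype 𝓜] [DecidableEq 𝓜]
    [Fintype 𝓨₁] [DecidableEq 𝓨₁] [Fintype 𝓨₂] [DecidableEq 𝓨₂]
    [Fintype 𝓢₁] [DecidableEq 𝓢₁] [Fintype 𝓢₂] [DecidableEq 𝓢₂]
    [Fintype 𝓧] [DecidableEq 𝓧]
    (n : ℕ) (μ : Ω → ℝ) (hμ : IsPMF μ) (δ : ℝ)
    (M : Ω → 𝓜) (Y₁ : Ω → Fin n → 𝓨₁) (Y₂ : Ω → Fin n → 𝓨₂)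
    (S₁ : Ω → Fin n → 𝓢₁) (S₂ : Ω → Fin n → 𝓢₂) (X : Ω → Fin n → 𝓧)
    (hMarkov : ∀ i : Fin n, MarkovChain μ (fun ω => S₁ ω i)
      (fun ω => (Y₁ ω i, Y₂ ω i, S₂ ω i, X ω i))
      (fun ω => ((fun j : {j : Fin n // j ≠ i} => Y₁ ω j.1),
        (fun j : {j : Fin n // j ≠ i} => Y₂ ω j.1),
        (fun j : {j : Fin n // j ≠ i} => S₂ ω j.1),
        M ω,
        (fun j : Fin i => S₁ ω (Fin.castLE i.isLt.le j)))))
    (hSecrecy : mutInfo μ M (fun ω => (Y₂ ω, S₂ ω)) ≤ δ) :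
    mutInfo μ M (fun ω => (Y₁ ω, Y₂ ω, S₁ ω, S₂ ω))
      ≤ ∑ i, (condH μ (fun ω => (Y₁ ω i, S₁ ω i)) (fun ω => (Y₂ ω i, S₂ ω i))
          - condH μ (fun ω => S₁ ω i) (fun ω => (Y₁ ω i, Y₂ ω i, S₂ ω i, X ω i)))
        + δ := by
  -- Step 1: decomposition identity
  -- entH recodes
  have hV : entH μ (fun ω => (Y₁ ω, Y₂ ω, S₁ ω, S₂ ω))
      = entH μ (fun ω => ((Y₁ ω, S₁ ω), (Y₂ ω, S₂ ω))) := by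
    refine entH_comp_inj' hμ (g := fun x : ((Fin n → 𝓨₁) × (Fin n → 𝓢₁)) ×
        ((Fin n → 𝓨₂) × (Fin n → 𝓢₂)) => (x.1.1, x.2.1, x.1.2, x.2.2)) ?_ _ (fun ω => rfl)
    intro a b h
    simp only [Prod.mk.injEq] at h
    simp_all [Prod.ext_iff]
  have hMV : entH μ (fun ω => (M ω, (Y₁ ω, Y₂ ω, S₁ ω, S₂ ω)))
      = entH μ (fun ω => ((Y₁ ω, S₁ ω), ((Y₂ ω, S₂ ω), M ω))) := by
    refine entH_comp_inj' hμ (g := fun x : ((Fin n → 𝓨₁) × (Fin n → 𝓢₁)) ×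
        (((Fin n → 𝓨₂) × (Fin n → 𝓢₂)) × 𝓜) =>
        (x.2.2, (x.1.1, x.2.1.1, x.1.2, x.2.1.2))) ?_ _ (fun ω => rfl)
    intro a b h
    simp only [Prod.mk.injEq] at h
    simp_all [Prod.ext_iff]
  have hMW : entH μ (fun ω => (M ω, (Y₂ ω, S₂ ω)))
      = entH μ (fun ω => ((Y₂ ω, S₂ ω), M ω)) := by
    refine entH_comp_inj' hμ (g := fun x : ((Fin n → 𝓨₂) × (Fin n → 𝓢₂)) × 𝓜 =>
        (x.2, x.1)) ?_ _ (fun ω => rfl)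
    intro a b h
    simp only [Prod.mk.injEq] at h
    simp_all [Prod.ext_iff]
  have step1 : mutInfo μ M (fun ω => (Y₁ ω, Y₂ ω, S₁ ω, S₂ ω))
      = mutInfo μ M (fun ω => (Y₂ ω, S₂ ω))
        + condH μ (fun ω => (Y₁ ω, S₁ ω)) (fun ω => (Y₂ ω, S₂ ω))
        - condH μ (fun ω => (Y₁ ω, S₁ ω)) (fun ω => ((Y₂ ω, S₂ ω), M ω)) := by
    simp only [mutInfo, condH]
    linarith [hV, hMV, hMW]
  -- Step 2: drop to S₁ⁿ
  have step2 : condH μ (fun ω => S₁ ω) (fun ω => (Y₁ ω, ((Y₂ ω, S₂ ω), M ω)))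
      ≤ condH μ (fun ω => (Y₁ ω, S₁ ω)) (fun ω => ((Y₂ ω, S₂ ω), M ω)) := by
    have hswap : condH μ (fun ω => (Y₁ ω, S₁ ω)) (fun ω => ((Y₂ ω, S₂ ω), M ω))
        = condH μ (fun ω => (S₁ ω, Y₁ ω)) (fun ω => ((Y₂ ω, S₂ ω), M ω)) := by
      refine condH_comp_left hμ (g := fun x : (Fin n → 𝓢₁) × (Fin n → 𝓨₁) =>
        (x.2, x.1)) ?_ _ _ (fun ω => rfl)
      intro a b h
      simp only [Prod.mk.injEq] at h
      simp_all [Prod.ext_iff]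
    have hchain := condH_pair_chain hμ (fun ω => S₁ ω) (fun ω => Y₁ ω)
      (fun ω => ((Y₂ ω, S₂ ω), M ω))
    have hnn := condH_nonneg hμ (fun ω => Y₁ ω) (fun ω => ((Y₂ ω, S₂ ω), M ω))
    rw [hswap]
    calc condH μ (fun ω => S₁ ω) (fun ω => (Y₁ ω, ((Y₂ ω, S₂ ω), M ω)))
        ≤ condH μ (fun ω => S₁ ω) (fun ω => (Y₁ ω, ((Y₂ ω, S₂ ω), M ω)))
          + condH μ (fun ω => Y₁ ω) (fun ω => ((Y₂ ω, S₂ ω), M ω)) := by linarith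
      _ = condH μ (fun ω => (S₁ ω, Y₁ ω)) (fun ω => ((Y₂ ω, S₂ ω), M ω)) := hchain.symm
  -- Step 3: recode the conditioner to T = (Y₁ⁿ, Y₂ⁿ, S₂ⁿ, M)
  have step3 : condH μ (fun ω => S₁ ω) (fun ω => (Y₁ ω, ((Y₂ ω, S₂ ω), M ω)))
      = condH μ (fun ω => S₁ ω) (fun ω => (Y₁ ω, Y₂ ω, S₂ ω, M ω)) := by
    refine condH_comp_right hμ (g := fun t : (Fin n → 𝓨₁) × (Fin n → 𝓨₂) ×
        (Fin n → 𝓢₂) × 𝓜 => (t.1, ((t.2.1, t.2.2.1), t.2.2.2))) ?_ _ _ (fun ω => rfl)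
    intro a b h
    simp only [Prod.mk.injEq] at h
    simp_all [Prod.ext_iff]
  -- Step 4: chain rule lower bound with Markov reduction
  have step4 : ∑ i, condH μ (fun ω => S₁ ω i) (fun ω => (Y₁ ω i, Y₂ ω i, S₂ ω i, X ω i))
      ≤ condH μ (fun ω => S₁ ω) (fun ω => (Y₁ ω, Y₂ ω, S₂ ω, M ω)) := by
    have hb : ∀ i : Fin n,
        condH μ (fun ω => S₁ ω i) (fun ω => (Y₁ ω i, Y₂ ω i, S₂ ω i, X ω i))
          ≤ condH μ (fun ω => S₁ ω i)
            (fun ω => ((fun j : Fin i.val => S₁ ω (Fin.castLE i.isLt.le j)),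
              (Y₁ ω, Y₂ ω, S₂ ω, M ω))) := by
      intro i
      have h1 : condH μ (fun ω => S₁ ω i)
          (fun ω => (((fun j : Fin i.val => S₁ ω (Fin.castLE i.isLt.le j)),
            (Y₁ ω, Y₂ ω, S₂ ω, M ω)), X ω i))
          ≤ condH μ (fun ω => S₁ ω i)
            (fun ω => ((fun j : Fin i.val => S₁ ω (Fin.castLE i.isLt.le j)),
              (Y₁ ω, Y₂ ω, S₂ ω, M ω))) :=
        condH_comp_right_ge hμ (fun ω => S₁ ω i)
          (fun ω => (((fun j : Fin i.val => S₁ ω (Fin.castLE i.isLt.le j)),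
            (Y₁ ω, Y₂ ω, S₂ ω, M ω)), X ω i)) Prod.fst
      have h2 : condH μ (fun ω => S₁ ω i)
          (fun ω => (((fun j : Fin i.val => S₁ ω (Fin.castLE i.isLt.le j)),
            (Y₁ ω, Y₂ ω, S₂ ω, M ω)), X ω i))
          = condH μ (fun ω => S₁ ω i)
            (fun ω => ((Y₁ ω i, Y₂ ω i, S₂ ω i, X ω i),
              ((fun j : {j : Fin n // j ≠ i} => Y₁ ω j.1),
               (fun j : {j : Fin n // j ≠ i} => Y₂ ω j.1),
               (fun j : {j : Fin n // j ≠ i} => S₂ ω j.1),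
               M ω,
               (fun j : Fin i => S₁ ω (Fin.castLE i.isLt.le j))))) := by
        refine condH_comp_right hμ
          (g := fun x : (𝓨₁ × 𝓨₂ × 𝓢₂ × 𝓧) ×
              (({j : Fin n // j ≠ i} → 𝓨₁) × ({j : Fin n // j ≠ i} → 𝓨₂) ×
               ({j : Fin n // j ≠ i} → 𝓢₂) × 𝓜 × (Fin i.val → 𝓢₁)) =>
            ((x.2.2.2.2.2,
              (insVec i x.1.1 x.2.1, insVec i x.1.2.1 x.2.2.1,
               insVec i x.1.2.2.1 x.2.2.2.1, x.2.2.2.2.1)), x.1.2.2.2)) ?_ _ _ ?_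
        · intro a b h
          obtain ⟨⟨ay1, ay2, as2, ax⟩, af1, af2, af3, am, ap⟩ := a
          obtain ⟨⟨by1, by2, bs2, bx⟩, bf1, bf2, bf3, bm, bp⟩ := b
          simp only [Prod.mk.injEq] at h
          obtain ⟨⟨hp, h1, h2, h3, hm⟩, hx⟩ := h
          obtain ⟨hv1, hf1⟩ := insVec_inj h1
          obtain ⟨hv2, hf2⟩ := insVec_inj h2
          obtain ⟨hv3, hf3⟩ := insVec_inj h3
          simp_all
        · intro ω
          simp only [insVec_eval]
      have h3 : condH μ (fun ω => S₁ ω i)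
          (fun ω => ((Y₁ ω i, Y₂ ω i, S₂ ω i, X ω i),
            ((fun j : {j : Fin n // j ≠ i} => Y₁ ω j.1),
             (fun j : {j : Fin n // j ≠ i} => Y₂ ω j.1),
             (fun j : {j : Fin n // j ≠ i} => S₂ ω j.1),
             M ω,
             (fun j : Fin i => S₁ ω (Fin.castLE i.isLt.le j)))))
          = condH μ (fun ω => S₁ ω i) (fun ω => (Y₁ ω i, Y₂ ω i, S₂ ω i, X ω i)) :=
        markov_condH hμ (hMarkov i)
      rw [← h3, ← h2]
      exact h1
    have hmain := condH_vec_ge (μ := μ) hμ n S₁ (fun ω => (Y₁ ω, Y₂ ω, S₂ ω, M ω))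
      (fun i => condH μ (fun ω => S₁ ω i) (fun ω => (Y₁ ω i, Y₂ ω i, S₂ ω i, X ω i)))
      hb
    exact hmain
  -- Step 5: subadditivity upper bound
  have step5 : condH μ (fun ω => (Y₁ ω, S₁ ω)) (fun ω => (Y₂ ω, S₂ ω))
      ≤ ∑ i, condH μ (fun ω => (Y₁ ω i, S₁ ω i)) (fun ω => (Y₂ ω i, S₂ ω i)) := by
    have hrec : condH μ (fun ω => (Y₁ ω, S₁ ω)) (fun ω => (Y₂ ω, S₂ ω))
        = condH μ (fun ω => fun j : Fin n => (Y₁ ω j, S₁ ω j)) (fun ω => (Y₂ ω, S₂ ω)) := by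
      refine condH_comp_left hμ (g := fun f : Fin n → 𝓨₁ × 𝓢₁ =>
        ((fun j => (f j).1), (fun j => (f j).2))) ?_ _ _ (fun ω => rfl)
      intro a b h
      simp only [Prod.mk.injEq] at h
      funext j
      exact Prod.ext (congrFun h.1 j) (congrFun h.2 j)
    have h5 := condH_vec_le (μ := μ) hμ n (fun ω => fun j : Fin n => (Y₁ ω j, S₁ ω j))
      (fun ω => (Y₂ ω, S₂ ω))
    have h5' : condH μ (fun ω => fun j : Fin n => (Y₁ ω j, S₁ ω j)) (fun ω => (Y₂ ω, S₂ ω))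
        ≤ ∑ i, condH μ (fun ω => (Y₁ ω i, S₁ ω i)) (fun ω => (Y₂ ω, S₂ ω)) := h5
    have h6 : ∀ i : Fin n,
        condH μ (fun ω => (Y₁ ω i, S₁ ω i)) (fun ω => (Y₂ ω, S₂ ω))
          ≤ condH μ (fun ω => (Y₁ ω i, S₁ ω i)) (fun ω => (Y₂ ω i, S₂ ω i)) := fun i =>
      condH_comp_right_ge hμ (fun ω => (Y₁ ω i, S₁ ω i)) (fun ω => (Y₂ ω, S₂ ω))
        (fun w => (w.1 i, w.2 i))
    rw [hrec]
    exact le_trans h5' (Finset.sum_le_sum fun i _ => h6 i)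
  -- Assemble
  rw [Finset.sum_sub_distrib]
  rw [step1]
  rw [step3] at step2
  linarith
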